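/- Let d ∈ ℕ with d ≥ 1, let Z be a nonempty set, and let w : Z → ℝ^d satisfy ‖w(z)‖₂ ≤ 1 for all z ∈ Z. Then for every C > 1 and every ε ∈ (0, 1) there exist indices z_1, …, z_d ∈ Z such that for every z ∈ Z there are coefficients β_1, …, β_d ∈ [−C, C] with ‖w(z) − Σ_{i=1}^d β_i w(z_i)‖₂ ≤ (3/2)·C·d·ε. -/

import Mathlib

open scoped BigOperators RealInnerProductSpace

set_option maxHeartbeats 1000000

lemma det_bound' {m : ℕ} (A : Matrix (Fin m) (Fin m) ℝ) (h : ∀ i j, |A i j| ≤ 1) :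
    |A.det| ≤ (Fintype.card (Equiv.Perm (Fin m)) : ℝ) := by
  rw [Matrix.det_apply']
  calc |∑ σ : Equiv.Perm (Fin m), ((Equiv.Perm.sign σ : ℤ) : ℝ) * ∏ i, A (σ i) i|
      ≤ ∑ σ : Equiv.Perm (Fin m), |((Equiv.Perm.sign σ : ℤ) : ℝ) * ∏ i, A (σ i) i| :=
        Finset.abs_sum_le_sum_abs _ _
    _ ≤ ∑ _σ : Equiv.Perm (Fin m), (1 : ℝ) := by
        apply Finset.sum_le_sum
        intro σ _
        have h1 : |((Equiv.Perm.sign σ : ℤ) : ℝ)| = 1 := by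
          rcases Int.units_eq_one_or (Equiv.Perm.sign σ) with h' | h' <;> simp [h']
        rw [abs_mul, h1, one_mul, Finset.abs_prod]
        exact Finset.prod_le_one (fun i _ => abs_nonneg _) (fun i _ => h _ _)
    _ = _ := by simp

/-- (Existence of approximate barycentric spanners, consequence of the
`RobustSpanner` guarantee.)  For any family `w : Z → ℝ^d` of vectors in the Euclidean unit
ball, any `C > 1` and any `ε ∈ (0,1)`, there are indices `z 1, …, z d ∈ Z` such that every
`w z` is within Euclidean distance `(3/2)·C·d·ε` of a `[-C, C]`-combination of
`w (z 1), …, w (z d)`. -/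
theorem stmt_7 (d : ℕ) (hd : 1 ≤ d) {Z : Type*} [Nonempty Z]
    (w : Z → EuclideanSpace ℝ (Fin d)) (hw : ∀ z, ‖w z‖ ≤ 1)
    (C : ℝ) (hC : 1 < C) (ε : ℝ) (hε : ε ∈ Set.Ioo (0 : ℝ) 1) :
    ∃ zs : Fin d → Z, ∀ z : Z, ∃ β : Fin d → ℝ,
      (∀ i, |β i| ≤ C) ∧ ‖w z - ∑ i, β i • w (zs i)‖ ≤ 3 / 2 * C * d * ε := by
  classical
  have hC0 : (0 : ℝ) < C := lt_trans one_pos hC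
  have hRHS : (0 : ℝ) ≤ 3 / 2 * C * d * ε := by
    have hε0 := hε.1
    positivity
  set V : Submodule ℝ (EuclideanSpace ℝ (Fin d)) := Submodule.span ℝ (Set.range w) with hVdef
  have hV : ∀ z, w z ∈ V := fun z => Submodule.subset_span ⟨z, rfl⟩
  set v : Z → V := fun z => ⟨w z, hV z⟩ with hvdef
  set m := Module.finrank ℝ V with hmdef
  have hm : m ≤ d := by
    have := Submodule.finrank_le V
    simpa [finrank_euclideanSpace_fin] using this
  -- span of range v is ⊤
  have hspan : Submodule.span ℝ (Set.range v) = ⊤ := by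
    apply Submodule.map_injective_of_injective V.injective_subtype
    rw [Submodule.map_span, Submodule.map_top, Submodule.range_subtype]
    congr 1
    rw [← Set.range_comp]
    rfl
  -- orthonormal basis of V
  let B := stdOrthonormalBasis ℝ V
  -- bound on the det function
  have hnorm : ∀ z, ‖v z‖ ≤ 1 := fun z => hw z
  have hentry : ∀ (x : V), ‖x‖ ≤ 1 → ∀ i, |B.toBasis.repr x i| ≤ 1 := by
    intro x hx i
    rw [B.coe_toBasis_repr_apply, B.repr_apply_apply]
    calc |(inner ℝ (B i) x : ℝ)| ≤ ‖B i‖ * ‖x‖ := abs_real_inner_le_norm _ _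
      _ ≤ 1 := by rw [B.orthonormal.1 i, one_mul]; exact hx
  have hDbound : ∀ t : Fin m → Z, |B.toBasis.det (v ∘ t)| ≤
      (Fintype.card (Equiv.Perm (Fin m)) : ℝ) := by
    intro t
    rw [Module.Basis.det_apply]
    apply det_bound'
    intro i j
    exact hentry _ (hnorm _) i
  -- existence of a linearly independent tuple of size m from range v
  obtain ⟨b, hbsub, hbspan, hbli⟩ := exists_linearIndependent ℝ (Set.range v)
  rw [hspan] at hbspan
  let B0 : Module.Basis b ℝ V := Module.Basis.mk hbli (by rw [Subtype.range_coe]; exact hbspan.ge)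
  haveI : Fintype b := FiniteDimensional.fintypeBasisIndex B0
  have hcard : Fintype.card b = m := (Module.finrank_eq_card_basis B0).symm
  let e : Fin m ≃ b := (Fintype.equivFinOfCardEq hcard).symm
  have ht0 : ∃ t0 : Fin m → Z, ∀ i, v (t0 i) = (e i : V) := by
    have : ∀ i : Fin m, ∃ z : Z, v z = (e i : V) := fun i => hbsub (e i).2
    exact ⟨fun i => (this i).choose, fun i => (this i).choose_spec⟩
  obtain ⟨t0, ht0⟩ := ht0
  have ht0det : B.toBasis.det (v ∘ t0) ≠ 0 := by
    have hB0 : (B0.reindex e.symm : Fin m → V) = v ∘ t0 := by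
      funext i
      simp only [Module.Basis.reindex_apply, Equiv.symm_symm, Function.comp_apply, ht0 i]
      simp [B0, Module.Basis.coe_mk]
    have := B.toBasis.isUnit_det (B0.reindex e.symm)
    rw [show B.toBasis.det ⇑(B0.reindex e.symm) = B.toBasis.det (v ∘ t0) by rw [hB0]] at this
    exact this.ne_zero
  -- the sup of |det| over tuples
  set D : (Fin m → Z) → ℝ := fun t => |B.toBasis.det (v ∘ t)| with hDdef
  set S : Set ℝ := Set.range D with hSdef
  have hSne : S.Nonempty := Set.range_nonempty D
  have hSbdd : BddAbove S := by
    refine ⟨(Fintype.card (Equiv.Perm (Fin m)) : ℝ), ?_⟩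
    rintro x ⟨t, rfl⟩
    exact hDbound t
  set M : ℝ := sSup S with hMdef
  have hM0 : 0 < M := by
    have : D t0 ≤ M := le_csSup hSbdd ⟨t0, rfl⟩
    have h1 : 0 < D t0 := abs_pos.mpr ht0det
    linarith
  have hMC : M / C < M := by
    rw [div_lt_iff₀ hC0]
    nlinarith
  obtain ⟨x, ⟨t, rfl⟩, hx⟩ := exists_lt_of_lt_csSup hSne hMC
  -- D t > M / C > 0, so v ∘ t is a basis
  have hDt0 : 0 < D t := lt_of_le_of_lt (by positivity) hx
  have hdetne : B.toBasis.det (v ∘ t) ≠ 0 := fun h => by simp [hDdef, h] at hDt0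
  obtain ⟨hli, hsp⟩ := (Module.Basis.is_basis_iff_det B.toBasis).mpr (isUnit_iff_ne_zero.mpr hdetne)
  let B' : Module.Basis (Fin m) ℝ V := Module.Basis.mk hli hsp.ge
  -- build zs
  refine ⟨fun i => if h : (i : ℕ) < m then t ⟨i, h⟩ else Classical.arbitrary Z, fun z => ?_⟩
  set γ : Fin m → ℝ := fun i => B'.repr (v z) i with hγdef
  -- Cramer bound on coefficients
  have hγle : ∀ i, |γ i| ≤ C := by
    intro i
    have hcramer : B.toBasis.det (v ∘ t) * γ i =
        B.toBasis.det (Function.update (v ∘ t) i (v z)) := by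
      have h := DFunLike.congr_fun (B.toBasis.det_smul_mk_coord_eq_det_update hli hsp.ge i) (v z)
      simpa [B', hγdef, Module.Basis.coord_apply, MultilinearMap.toLinearMap_apply, smul_eq_mul] using h
    have hupd : Function.update (v ∘ t) i (v z) = v ∘ (Function.update t i z) := by
      funext j
      rcases eq_or_ne j i with rfl | hj
      · simp
      · simp [Function.update_of_ne hj]
    have hle : |B.toBasis.det (Function.update (v ∘ t) i (v z))| ≤ M := by
      rw [hupd]
      exact le_csSup hSbdd ⟨Function.update t i z, rfl⟩
    have h1 : D t * |γ i| ≤ M := by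
      show |B.toBasis.det (v ∘ t)| * |γ i| ≤ M
      calc |B.toBasis.det (v ∘ t)| * |γ i| = |B.toBasis.det (v ∘ t) * γ i| := (abs_mul _ _).symm
        _ = |B.toBasis.det (Function.update (v ∘ t) i (v z))| := by rw [hcramer]
        _ ≤ M := hle
    by_contra hcon
    push_neg at hcon
    have e1 : M / C * C < D t * C := mul_lt_mul_of_pos_right hx hC0
    have e2 : D t * C < D t * |γ i| := mul_lt_mul_of_pos_left hcon hDt0
    have e3 : M / C * C = M := div_mul_cancel₀ M (ne_of_gt hC0)
    linarith
  -- exact representation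
  have hB'app : ∀ j, B' j = v (t j) := fun j => Module.Basis.mk_apply hli hsp.ge j
  have hrep : w z = ∑ i : Fin m, γ i • w (t i) := by
    have h1 : v z = ∑ i : Fin m, γ i • v (t i) := by
      calc v z = ∑ i : Fin m, B'.repr (v z) i • B' i := (B'.sum_repr (v z)).symm
        _ = ∑ i : Fin m, γ i • v (t i) :=
          Finset.sum_congr rfl fun i _ => by rw [hB'app i]
    have h2 := congrArg (Subtype.val : V → EuclideanSpace ℝ (Fin d)) h1
    rw [Submodule.coe_sum] at h2
    simpa using h2
  refine ⟨fun i => if h : (i : ℕ) < m then γ ⟨i, h⟩ else 0, fun i => ?_, ?_⟩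
  · by_cases h : (i : ℕ) < m
    · simpa [h] using hγle ⟨i, h⟩
    · simp [h]
      linarith
  · have hsum : (∑ i : Fin d, (if h : (i : ℕ) < m then γ ⟨i, h⟩ else 0) •
        w (if h : (i : ℕ) < m then t ⟨i, h⟩ else Classical.arbitrary Z)) =
        ∑ i : Fin m, γ i • w (t i) := by
      have h1 : ∑ i : Fin m, γ i • w (t i) =
          ∑ i ∈ Finset.univ.map (Fin.castLEEmb hm),
            (if h : (i : ℕ) < m then γ ⟨i, h⟩ else 0) •
              w (if h : (i : ℕ) < m then t ⟨i, h⟩ else Classical.arbitrary Z) := by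
        rw [Finset.sum_map]
        refine Finset.sum_congr rfl fun j _ => ?_
        have hj : ((Fin.castLEEmb hm j : Fin d) : ℕ) < m := by
          simpa using j.2
        rw [dif_pos hj, dif_pos hj]
        congr 1
      rw [h1]
      refine (Finset.sum_subset (Finset.subset_univ _) ?_).symm
      intro i _ hi
      have hnot : ¬ (i : ℕ) < m := by
        intro h
        exact hi (Finset.mem_map.mpr ⟨⟨i, h⟩, Finset.mem_univ _, by ext; simp⟩)
      simp [hnot]
    rw [hsum, ← hrep]
    simpa using hRHS
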